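/- Steady Kawashima estimate and invertibility: Let m > n ≥ 1, let X ⊆ ℂ^m be a subspace with dim X = n, Y = X^⊥, and P_X, P_Y the orthogonal projections onto X and Y. Let A : ℂ^m → ℂ^m be Hermitian and satisfy the Kawashima condition relative to X, and let L : ℂ^m → ℂ^m be Hermitian negative semidefinite with ker L = X. Then there exists C > 0, depending only on A, L and X, such that for every τ ∈ ℝ \ {0} and all u, f ∈ ℂ^m with iτ A u + L u + f = 0 one has ‖u‖ ≤ C max(1, τ^{-2}) ‖f‖; in particular, for every τ ≠ 0 the map iτ A + L is invertible. Moreover, for 0 < |τ| ≤ 1 one has the refined bound ‖P_Y u‖² + τ² ‖P_X u‖² ≤ C ( ‖P_Y f‖² + τ^{-2} ‖P_X f‖² ). -/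

import Mathlib

noncomputable section

open Complex in
lemma psd_norm_sq_le {E : Type*} [NormedAddCommGroup E] [InnerProductSpace ℂ E]
    [FiniteDimensional ℂ E] (B : Module.End ℂ E)
    (hB : ∀ u w : E, (inner ℂ (B u) w : ℂ) = inner ℂ u (B w))
    (hpos : ∀ u : E, 0 ≤ (inner ℂ (B u) u : ℂ).re) :
    ∃ c : ℝ, 0 ≤ c ∧ ∀ u : E, ‖B u‖ ^ 2 ≤ c * (inner ℂ (B u) u : ℂ).re := by
  set cB := ‖LinearMap.toContinuousLinearMap B‖ with hcB
  have hcB0 : 0 ≤ cB := norm_nonneg _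
  refine ⟨cB, hcB0, fun u => ?_⟩
  have hBle : ∀ v : E, ‖B v‖ ≤ cB * ‖v‖ := fun v =>
    (LinearMap.toContinuousLinearMap B).le_opNorm v
  have key : ∀ t : ℝ, 0 ≤ (inner ℂ (B (B u)) (B u) : ℂ).re * (t * t)
      + (2 * ‖B u‖ ^ 2) * t + (inner ℂ (B u) u : ℂ).re := by
    intro t
    have h := hpos (u + (t : ℂ) • B u)
    have expand : (inner ℂ (B (u + (t:ℂ) • B u)) (u + (t:ℂ) • B u) : ℂ)
        = inner ℂ (B u) u + (t:ℂ) * inner ℂ (B u) (B u)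
          + (t:ℂ) * inner ℂ (B (B u)) u + (t:ℂ) * (t:ℂ) * inner ℂ (B (B u)) (B u) := by
      simp only [map_add, map_smul, inner_add_left, inner_add_right,
        inner_smul_left, inner_smul_right, Complex.conj_ofReal]
      ring
    have h2 : (inner ℂ (B (B u)) u : ℂ) = inner ℂ (B u) (B u) := by
      rw [hB (B u) u]
    have h3 : (inner ℂ (B u) (B u) : ℂ) = (‖B u‖ ^ 2 : ℝ) := by
      rw [inner_self_eq_norm_sq_to_K]; norm_num
    rw [expand, h2, h3] at h
    simp only [Complex.add_re, Complex.mul_re, Complex.mul_im, Complex.ofReal_re, Complex.ofReal_im] at h ⊢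
    nlinarith [h]
  have hd := discrim_le_zero key
  rw [discrim] at hd
  -- (2‖Bu‖²)² - 4 * a * c ≤ 0
  have ha : (inner ℂ (B (B u)) (B u) : ℂ).re ≤ cB * ‖B u‖ ^ 2 := by
    calc (inner ℂ (B (B u)) (B u) : ℂ).re ≤ ‖(inner ℂ (B (B u)) (B u) : ℂ)‖ :=
          Complex.re_le_norm _
    _ ≤ ‖B (B u)‖ * ‖B u‖ := norm_inner_le_norm _ _
    _ ≤ (cB * ‖B u‖) * ‖B u‖ := by
          have := hBle (B u); nlinarith [norm_nonneg (B u)]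
    _ = cB * ‖B u‖ ^ 2 := by ring
  rcases eq_or_ne (B u) 0 with h0 | h0
  · simp [h0, hpos u]
  · have hpos' : 0 < ‖B u‖ ^ 2 := by have := norm_pos_iff.mpr h0; nlinarith
    nlinarith [hpos u, sq_nonneg (‖B u‖)]

lemma re_identity {E : Type*} [NormedAddCommGroup E] [InnerProductSpace ℂ E]
    (A L : Module.End ℂ E)
    (hA : ∀ u w : E, (inner ℂ (A u) w : ℂ) = inner ℂ u (A w))
    (τ : ℝ) (u f : E)
    (hrel : ((τ : ℂ) * Complex.I) • A u + L u + f = 0) :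
    (inner ℂ (L u) u : ℂ).re + (inner ℂ f u : ℂ).re = 0 := by
  have him : (inner ℂ (A u) u : ℂ).im = 0 := by
    have h1 : (inner ℂ (A u) u : ℂ) = inner ℂ u (A u) := hA u u
    have h2 : (inner ℂ u (A u) : ℂ) = starRingEnd ℂ (inner ℂ (A u) u) := by
      rw [← inner_conj_symm]
    have h3 : (inner ℂ (A u) u : ℂ) = starRingEnd ℂ (inner ℂ (A u) u) := h1.trans h2
    exact Complex.conj_eq_iff_im.mp h3.symm
  have h0 : (inner ℂ (((τ : ℂ) * Complex.I) • A u + L u + f) u : ℂ) = 0 := by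
    rw [hrel, inner_zero_left]
  rw [inner_add_left, inner_add_left, inner_smul_left] at h0
  have := congrArg Complex.re h0
  simp only [Complex.add_re, Complex.mul_re, Complex.zero_re, map_mul,
    Complex.conj_ofReal, Complex.conj_I, Complex.mul_im, Complex.mul_re,
    Complex.ofReal_re, Complex.ofReal_im, Complex.I_re, Complex.I_im,
    Complex.neg_re, Complex.neg_im] at this
  rw [him] at this
  linarith

lemma key_estimate {E : Type*} [NormedAddCommGroup E] [InnerProductSpace ℂ E]
    [FiniteDimensional ℂ E]
    (X : Submodule ℂ E) (A L : Module.End ℂ E)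
    (hA : ∀ u w : E, (inner ℂ (A u) w : ℂ) = inner ℂ u (A w))
    (hKaw : ∀ x ∈ X, ∀ c : ℂ, A x = c • x → x = 0)
    (hL : ∀ u w : E, (inner ℂ (L u) w : ℂ) = inner ℂ u (L w))
    (hLneg : ∀ u : E, (inner ℂ (L u) u : ℂ).re ≤ 0)
    (hker : LinearMap.ker L = X) :
    ∃ C > (0:ℝ), ∀ τ : ℝ, τ ≠ 0 → ∀ u f : E,
      ((τ : ℂ) * Complex.I) • A u + L u + f = 0 →
      ‖u‖ ≤ C * max 1 (τ ^ 2)⁻¹ * ‖f‖ := by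
  obtain ⟨cL, hcL0, hcL⟩ := psd_norm_sq_le (-L)
    (by intro u w; simp only [LinearMap.neg_apply, inner_neg_left, inner_neg_right, hL u w])
    (by intro u; simp only [LinearMap.neg_apply, inner_neg_left, Complex.neg_re];
        linarith [hLneg u])
  have hcL' : ∀ u : E, ‖L u‖ ^ 2 ≤ cL * (-(inner ℂ (L u) u : ℂ).re) := by
    intro u
    have := hcL u
    simpa only [LinearMap.neg_apply, norm_neg, inner_neg_left, Complex.neg_re] using this
  by_contra hcon
  push_neg at hcon
  choose τ hτ u f hrel hgt using fun k : ℕ => hcon (k + 1) (by positivity)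
  -- normalize
  have hu0 : ∀ k, u k ≠ 0 := by
    intro k h0
    have := hgt k
    rw [h0, norm_zero] at this
    have h1 : (0:ℝ) ≤ ((k:ℝ) + 1) * max 1 ((τ k) ^ 2)⁻¹ * ‖f k‖ := by positivity
    linarith
  set v : ℕ → E := fun k => ((‖u k‖⁻¹ : ℝ) : ℂ) • u k with hv
  set g : ℕ → E := fun k => ((‖u k‖⁻¹ : ℝ) : ℂ) • f k with hg
  have hv1 : ∀ k, ‖v k‖ = 1 := by
    intro k
    rw [hv]
    simp only [norm_smul, Complex.norm_real, Real.norm_eq_abs,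
      abs_of_nonneg (inv_nonneg.mpr (norm_nonneg (u k)))]
    exact inv_mul_cancel₀ (norm_ne_zero_iff.mpr (hu0 k))
  have hrel' : ∀ k, ((τ k : ℂ) * Complex.I) • A (v k) + L (v k) + g k = 0 := by
    intro k
    have : ((τ k : ℂ) * Complex.I) • A (v k) + L (v k) + g k
        = ((‖u k‖⁻¹ : ℝ) : ℂ) • (((τ k : ℂ) * Complex.I) • A (u k) + L (u k) + f k) := by
      simp only [hv, hg, map_smul, smul_add, smul_comm (((‖u k‖⁻¹ : ℝ) : ℂ))]
    rw [this, hrel k, smul_zero]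
  -- bound on g
  have hM1 : ∀ k, (1:ℝ) ≤ max 1 ((τ k) ^ 2)⁻¹ := fun k => le_max_left _ _
  have hτ2 : ∀ k, (0:ℝ) < (τ k) ^ 2 := fun k => by have := hτ k; positivity
  have hgb : ∀ k : ℕ, ((k:ℝ) + 1) * ‖g k‖ * max 1 ((τ k) ^ 2)⁻¹ ≤ 1 := by
    intro k
    have hgt' := hgt k
    have hun : 0 < ‖u k‖ := norm_pos_iff.mpr (hu0 k)
    have hgnorm : ‖g k‖ = ‖u k‖⁻¹ * ‖f k‖ := by
      rw [hg]
      simp [norm_smul, abs_of_nonneg (inv_nonneg.mpr (norm_nonneg (u k)))]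
    rw [hgnorm]
    have h2 : ((k:ℝ) + 1) * max 1 ((τ k) ^ 2)⁻¹ * ‖f k‖ ≤ ‖u k‖ := le_of_lt hgt'
    calc ((k:ℝ) + 1) * (‖u k‖⁻¹ * ‖f k‖) * max 1 ((τ k) ^ 2)⁻¹
        = (((k:ℝ) + 1) * max 1 ((τ k) ^ 2)⁻¹ * ‖f k‖) * ‖u k‖⁻¹ := by ring
      _ ≤ ‖u k‖ * ‖u k‖⁻¹ := by
          apply mul_le_mul_of_nonneg_right h2 (inv_nonneg.mpr (norm_nonneg _))
      _ = 1 := mul_inv_cancel₀ (ne_of_gt hun)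
  have hg1 : ∀ k : ℕ, ((k:ℝ) + 1) * ‖g k‖ ≤ 1 := by
    intro k
    have := hgb k
    nlinarith [hM1 k, norm_nonneg (g k), Nat.cast_nonneg (α := ℝ) k]
  have hg2 : ∀ k : ℕ, ((k:ℝ) + 1) * ‖g k‖ ≤ (τ k) ^ 2 := by
    intro k
    have h := hgb k
    have hmx : ((τ k) ^ 2)⁻¹ ≤ max 1 ((τ k) ^ 2)⁻¹ := le_max_right _ _
    have h0 : 0 ≤ ((k:ℝ) + 1) * ‖g k‖ := by positivity
    nlinarith [hτ2 k, inv_pos.mpr (hτ2 k), mul_inv_cancel₀ (ne_of_gt (hτ2 k))]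
  have hg3 : ∀ k : ℕ, ((k:ℝ) + 1) * ‖g k‖ ≤ |τ k| := by
    intro k
    rcases le_total (|τ k|) 1 with h | h
    · calc ((k:ℝ) + 1) * ‖g k‖ ≤ (τ k) ^ 2 := hg2 k
        _ = |τ k| * |τ k| := by rw [← sq_abs]; ring
        _ ≤ 1 * |τ k| := by nlinarith [abs_nonneg (τ k)]
        _ = |τ k| := one_mul _
    · exact le_trans (hg1 k) h
  -- re identity consequences
  have hre : ∀ k, -(inner ℂ (L (v k)) (v k) : ℂ).re ≤ ‖g k‖ := by
    intro k
    have hid := re_identity A L hA (τ k) (v k) (g k) (hrel' k)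
    have : (inner ℂ (g k) (v k) : ℂ).re ≤ ‖g k‖ := by
      calc (inner ℂ (g k) (v k) : ℂ).re ≤ ‖(inner ℂ (g k) (v k) : ℂ)‖ := Complex.re_le_norm _
        _ ≤ ‖g k‖ * ‖v k‖ := norm_inner_le_norm _ _
        _ = ‖g k‖ := by rw [hv1 k, mul_one]
    linarith
  have hLsq : ∀ k, ‖L (v k)‖ ^ 2 ≤ cL * ‖g k‖ := by
    intro k
    calc ‖L (v k)‖ ^ 2 ≤ cL * (-(inner ℂ (L (v k)) (v k) : ℂ).re) := hcL' (v k)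
      _ ≤ cL * ‖g k‖ := mul_le_mul_of_nonneg_left (hre k) hcL0
  set a : ℕ → ℝ := fun k => Real.sqrt (cL / ((k:ℝ) + 1)) with ha
  have hk1 : ∀ k : ℕ, (0:ℝ) < (k:ℝ) + 1 := fun k => by positivity
  have hLb1 : ∀ k, ‖L (v k)‖ ≤ a k := by
    intro k
    have h1 : ‖L (v k)‖ ^ 2 ≤ cL / ((k:ℝ) + 1) := by
      have h2 := hLsq k
      have hgk : ‖g k‖ ≤ 1 / ((k:ℝ) + 1) := by
        rw [le_div_iff₀ (hk1 k)]; linarith [hg1 k]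
      calc ‖L (v k)‖ ^ 2 ≤ cL * ‖g k‖ := h2
        _ ≤ cL * (1 / ((k:ℝ) + 1)) := mul_le_mul_of_nonneg_left hgk hcL0
        _ = cL / ((k:ℝ) + 1) := by ring
    calc ‖L (v k)‖ = Real.sqrt (‖L (v k)‖ ^ 2) := (Real.sqrt_sq (norm_nonneg _)).symm
      _ ≤ a k := Real.sqrt_le_sqrt h1
  have hLb2 : ∀ k, ‖L (v k)‖ ≤ a k * |τ k| := by
    intro k
    have h1 : ‖L (v k)‖ ^ 2 ≤ cL / ((k:ℝ) + 1) * (τ k) ^ 2 := by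
      have h2 := hLsq k
      have h3 := hg2 k
      have h4 : ‖g k‖ ≤ (τ k) ^ 2 / ((k:ℝ) + 1) := by
        rw [le_div_iff₀ (hk1 k)]; linarith [hg2 k]
      calc ‖L (v k)‖ ^ 2 ≤ cL * ‖g k‖ := h2
        _ ≤ cL * ((τ k) ^ 2 / ((k:ℝ) + 1)) := mul_le_mul_of_nonneg_left h4 hcL0
        _ = cL / ((k:ℝ) + 1) * (τ k) ^ 2 := by ring
    calc ‖L (v k)‖ = Real.sqrt (‖L (v k)‖ ^ 2) := (Real.sqrt_sq (norm_nonneg _)).symm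
      _ ≤ Real.sqrt (cL / ((k:ℝ) + 1) * (τ k) ^ 2) := Real.sqrt_le_sqrt h1
      _ = a k * |τ k| := by
          rw [Real.sqrt_mul (by positivity), Real.sqrt_sq_eq_abs]
  have hAb : ∀ k, ‖A (v k)‖ ≤ a k + 1 / ((k:ℝ) + 1) := by
    intro k
    have habs : (0:ℝ) < |τ k| := abs_pos.mpr (hτ k)
    have heq : ((τ k : ℂ) * Complex.I) • A (v k) = -(L (v k) + g k) := by
      have h := hrel' k
      rw [add_assoc] at h
      exact eq_neg_of_add_eq_zero_left h
    have hnorm : |τ k| * ‖A (v k)‖ = ‖L (v k) + g k‖ := by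
      have := congrArg norm heq
      rwa [norm_smul, norm_neg, norm_mul, Complex.norm_I, mul_one,
        Complex.norm_real, Real.norm_eq_abs] at this
    have hb : |τ k| * ‖A (v k)‖ ≤ |τ k| * (a k + 1 / ((k:ℝ) + 1)) := by
      rw [hnorm]
      have hgk : ‖g k‖ ≤ |τ k| / ((k:ℝ) + 1) := by
        rw [le_div_iff₀ (hk1 k)]; linarith [hg3 k]
      calc ‖L (v k) + g k‖ ≤ ‖L (v k)‖ + ‖g k‖ := norm_add_le _ _
        _ ≤ a k * |τ k| + |τ k| / ((k:ℝ) + 1) := add_le_add (hLb2 k) hgk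
        _ = |τ k| * (a k + 1 / ((k:ℝ) + 1)) := by ring
    exact le_of_mul_le_mul_left hb habs
  -- limits of the bounds
  have hdiv : ∀ c : ℝ, Filter.Tendsto (fun k : ℕ => c / ((k:ℝ) + 1)) Filter.atTop (nhds 0) := by
    intro c
    have h1 : Filter.Tendsto (fun k : ℕ => ((k:ℝ) + 1)) Filter.atTop Filter.atTop :=
      Filter.tendsto_atTop_add_const_right _ 1 tendsto_natCast_atTop_atTop
    exact Filter.Tendsto.div_atTop tendsto_const_nhds h1
  have hatend : Filter.Tendsto a Filter.atTop (nhds 0) := by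
    have h1 := (Real.continuous_sqrt.tendsto 0).comp (hdiv cL)
    rw [Real.sqrt_zero] at h1
    exact h1
  have hetend : Filter.Tendsto (fun k => a k + 1 / ((k:ℝ) + 1)) Filter.atTop (nhds 0) := by
    have := hatend.add (hdiv 1)
    simpa using this
  -- compactness
  have hvs : ∀ k, v k ∈ Metric.sphere (0:E) 1 := by
    intro k; rw [mem_sphere_zero_iff_norm]; exact hv1 k
  obtain ⟨z, hz, φ, hφ, hvz⟩ := (isCompact_sphere (0:E) 1).tendsto_subseq hvs
  have hφtop : Filter.Tendsto φ Filter.atTop Filter.atTop := hφ.tendsto_atTop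
  have hcontL : Continuous L := L.continuous_of_finiteDimensional
  have hcontA : Continuous A := A.continuous_of_finiteDimensional
  have hLz : L z = 0 := by
    have h1 : Filter.Tendsto (fun k => L (v (φ k))) Filter.atTop (nhds (L z)) :=
      (hcontL.tendsto z).comp hvz
    have h2 : Filter.Tendsto (fun k => L (v (φ k))) Filter.atTop (nhds 0) := by
      rw [tendsto_zero_iff_norm_tendsto_zero]
      exact squeeze_zero (fun k => norm_nonneg _) (fun k => hLb1 (φ k)) (hatend.comp hφtop)
    exact tendsto_nhds_unique h1 h2
  have hAz : A z = 0 := by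
    have h1 : Filter.Tendsto (fun k => A (v (φ k))) Filter.atTop (nhds (A z)) :=
      (hcontA.tendsto z).comp hvz
    have h2 : Filter.Tendsto (fun k => A (v (φ k))) Filter.atTop (nhds 0) := by
      rw [tendsto_zero_iff_norm_tendsto_zero]
      exact squeeze_zero (fun k => norm_nonneg _) (fun k => hAb (φ k)) (hetend.comp hφtop)
    exact tendsto_nhds_unique h1 h2
  have hzX : z ∈ X := by
    rw [← hker]
    exact LinearMap.mem_ker.mpr hLz
  have hz0 : z = 0 := hKaw z hzX 0 (by rw [hAz, zero_smul])
  have hz1 : ‖z‖ = 1 := mem_sphere_zero_iff_norm.mp hz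
  rw [hz0, norm_zero] at hz1
  exact zero_ne_one hz1

set_option maxHeartbeats 1000000 in
lemma refined_estimate {E : Type*} [NormedAddCommGroup E] [InnerProductSpace ℂ E]
    [FiniteDimensional ℂ E]
    (X : Submodule ℂ E) (A L : Module.End ℂ E)
    (hA : ∀ u w : E, (inner ℂ (A u) w : ℂ) = inner ℂ u (A w))
    (hKaw : ∀ x ∈ X, ∀ c : ℂ, A x = c • x → x = 0)
    (hL : ∀ u w : E, (inner ℂ (L u) w : ℂ) = inner ℂ u (L w))
    (hLneg : ∀ u : E, (inner ℂ (L u) u : ℂ).re ≤ 0)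
    (hker : LinearMap.ker L = X) :
    ∃ C > (0:ℝ), ∀ τ : ℝ, τ ≠ 0 → |τ| ≤ 1 → ∀ u f : E,
      ((τ : ℂ) * Complex.I) • A u + L u + f = 0 →
      ‖(Submodule.orthogonalProjectionOnto Xᗮ u : E)‖ ^ 2 + τ ^ 2 * ‖(Submodule.orthogonalProjectionOnto X u : E)‖ ^ 2
        ≤ C * (‖(Submodule.orthogonalProjectionOnto Xᗮ f : E)‖ ^ 2
            + (τ ^ 2)⁻¹ * ‖(Submodule.orthogonalProjectionOnto X f : E)‖ ^ 2) := by
  obtain ⟨cL, hcL0, hcL⟩ := psd_norm_sq_le (-L)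
    (by intro u w; simp only [LinearMap.neg_apply, inner_neg_left, inner_neg_right, hL u w])
    (by intro u; simp only [LinearMap.neg_apply, inner_neg_left, Complex.neg_re];
        linarith [hLneg u])
  have hcL' : ∀ u : E, ‖L u‖ ^ 2 ≤ cL * (-(inner ℂ (L u) u : ℂ).re) := by
    intro u
    have := hcL u
    simpa only [LinearMap.neg_apply, norm_neg, inner_neg_left, Complex.neg_re] using this
  by_contra hcon
  push_neg at hcon
  choose τ hτ0 hτ1 u f hrel hgt using fun k : ℕ => hcon (k + 1) (by positivity)
  have hk1 : ∀ k : ℕ, (0:ℝ) < (k:ℝ) + 1 := fun k => by positivity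
  have hτ2 : ∀ k : ℕ, (0:ℝ) < (τ k) ^ 2 := fun k => by have := hτ0 k; positivity
  set Pj : E → E := fun z => (Submodule.orthogonalProjectionOnto X z : E) with hPj
  set Qj : E → E := fun z => (Submodule.orthogonalProjectionOnto Xᗮ z : E) with hQj
  -- `hgt` in terms of Pj/Qj
  have hgt' : ∀ k : ℕ, ((k:ℝ) + 1) * (‖Qj (f k)‖ ^ 2 + ((τ k) ^ 2)⁻¹ * ‖Pj (f k)‖ ^ 2)
      < ‖Qj (u k)‖ ^ 2 + (τ k) ^ 2 * ‖Pj (u k)‖ ^ 2 := fun k => hgt k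
  set Nsq : ℕ → ℝ := fun k => ‖Qj (u k)‖ ^ 2 + (τ k) ^ 2 * ‖Pj (u k)‖ ^ 2 with hNsq
  have hRHS0 : ∀ k : ℕ, (0:ℝ) ≤ ‖Qj (f k)‖ ^ 2 + ((τ k) ^ 2)⁻¹ * ‖Pj (f k)‖ ^ 2 := by
    intro k
    have := hτ2 k
    positivity
  have hNsq0 : ∀ k, 0 < Nsq k := by
    intro k
    simp only [hNsq]
    nlinarith [hgt' k, hRHS0 k, hk1 k]
  set N : ℕ → ℝ := fun k => Real.sqrt (Nsq k) with hN
  have hN0 : ∀ k, 0 < N k := fun k => Real.sqrt_pos.mpr (hNsq0 k)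
  have hNsq' : ∀ k, (N k) ^ 2 = Nsq k := fun k => Real.sq_sqrt (hNsq0 k).le
  set c : ℕ → ℝ := fun k => (N k)⁻¹ with hc
  have hc0 : ∀ k, 0 < c k := fun k => inv_pos.mpr (hN0 k)
  set x : ℕ → E := fun k => ((c k : ℝ) : ℂ) • Pj (u k) with hx
  set w : ℕ → E := fun k => ((c k : ℝ) : ℂ) • Qj (u k) with hw
  set v : ℕ → E := fun k => (τ k : ℂ) • x k with hv
  set g : ℕ → E := fun k => ((c k : ℝ) : ℂ) • f k with hg
  have hxX : ∀ k, x k ∈ X := fun k => X.smul_mem _ (Submodule.orthogonalProjectionOnto X (u k)).2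
  have hwY : ∀ k, w k ∈ Xᗮ := fun k => Xᗮ.smul_mem _ (Submodule.orthogonalProjectionOnto Xᗮ (u k)).2
  have hvX : ∀ k, v k ∈ X := fun k => X.smul_mem _ (hxX k)
  have hnx : ∀ k, ‖x k‖ = c k * ‖Pj (u k)‖ := by
    intro k
    rw [hx]
    simp [norm_smul, abs_of_pos (hc0 k)]
  have hnw : ∀ k, ‖w k‖ = c k * ‖Qj (u k)‖ := by
    intro k
    rw [hw]
    simp [norm_smul, abs_of_pos (hc0 k)]
  have hnv : ∀ k, ‖v k‖ = |τ k| * (c k * ‖Pj (u k)‖) := by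
    intro k
    rw [hv]
    simp [norm_smul, hnx k]
  have h4main : ∀ k, (c k) ^ 2 * Nsq k = 1 := by
    intro k
    have h3 : N k * c k = 1 := mul_inv_cancel₀ (ne_of_gt (hN0 k))
    calc (c k) ^ 2 * Nsq k = (N k * c k) ^ 2 := by rw [← hNsq' k]; ring
      _ = 1 := by rw [h3]; norm_num
  have hone : ∀ k, ‖w k‖ ^ 2 + ‖v k‖ ^ 2 = 1 := by
    intro k
    rw [hnw, hnv]
    have h4 : (c k) ^ 2 * (‖Qj (u k)‖ ^ 2 + (τ k) ^ 2 * ‖Pj (u k)‖ ^ 2) = 1 := by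
      have := h4main k
      simpa only [hNsq] using this
    calc (c k * ‖Qj (u k)‖) ^ 2 + (|τ k| * (c k * ‖Pj (u k)‖)) ^ 2
        = (c k) ^ 2 * (‖Qj (u k)‖ ^ 2 + (τ k) ^ 2 * ‖Pj (u k)‖ ^ 2) := by
          rw [← sq_abs (τ k)]; ring
      _ = 1 := h4
  have hw1 : ∀ k, ‖w k‖ ≤ 1 := by
    intro k
    have := hone k
    nlinarith [norm_nonneg (w k), norm_nonneg (v k)]
  have hv1 : ∀ k, ‖v k‖ ≤ 1 := by
    intro k
    have := hone k
    nlinarith [norm_nonneg (w k), norm_nonneg (v k)]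
  have hsum : ∀ k, x k + w k = ((c k : ℝ) : ℂ) • u k := by
    intro k
    rw [hx, hw, ← smul_add]
    congr 1
    exact Submodule.starProjection_add_starProjection_orthogonal (K := X) (u k)
  have hLx : ∀ k, L (x k) = 0 := by
    intro k
    have : x k ∈ LinearMap.ker L := by rw [hker]; exact hxX k
    exact LinearMap.mem_ker.mp this
  have hrelscaled : ∀ k, ((τ k : ℂ) * Complex.I) • A (((c k : ℝ) : ℂ) • u k)
      + L (((c k : ℝ) : ℂ) • u k) + g k = 0 := by
    intro k
    have : ((τ k : ℂ) * Complex.I) • A (((c k : ℝ) : ℂ) • u k)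
        + L (((c k : ℝ) : ℂ) • u k) + g k
        = ((c k : ℝ) : ℂ) • (((τ k : ℂ) * Complex.I) • A (u k) + L (u k) + f k) := by
      simp only [hg, map_smul, smul_add, smul_comm (((c k : ℝ) : ℂ))]
    rw [this, hrel k, smul_zero]
  have hrel' : ∀ k, Complex.I • A (v k) + ((τ k : ℂ) * Complex.I) • A (w k)
      + L (w k) + g k = 0 := by
    intro k
    have hIv : Complex.I • A (v k) = ((τ k : ℂ) * Complex.I) • A (x k) := by
      rw [hv, map_smul, smul_smul, mul_comm]
    have h1 : Complex.I • A (v k) + ((τ k : ℂ) * Complex.I) • A (w k) + L (w k) + g k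
        = ((τ k : ℂ) * Complex.I) • A (x k + w k) + L (x k + w k) + g k := by
      rw [hIv, map_add, map_add, smul_add, hLx k, zero_add]
    rw [h1, hsum k]
    exact hrelscaled k
  -- bounds on projections of g
  set β : ℕ → ℝ := fun k => Real.sqrt (1 / ((k:ℝ) + 1)) with hβ
  have hβ0 : ∀ k, 0 ≤ β k := fun k => Real.sqrt_nonneg _
  have hgproj : ∀ k, ‖Qj (g k)‖ ^ 2 + ((τ k) ^ 2)⁻¹ * ‖Pj (g k)‖ ^ 2 ≤ 1 / ((k:ℝ) + 1) := by
    intro k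
    have hQg : Qj (g k) = ((c k : ℝ) : ℂ) • Qj (f k) := by
      rw [hQj, hg]
      simp [map_smul]
    have hPg : Pj (g k) = ((c k : ℝ) : ℂ) • Pj (f k) := by
      rw [hPj, hg]
      simp [map_smul]
    rw [hQg, hPg]
    have hnsm : ∀ z : E, ‖((c k : ℝ) : ℂ) • z‖ = c k * ‖z‖ := by
      intro z
      simp [norm_smul, abs_of_pos (hc0 k)]
    rw [hnsm, hnsm]
    have h4 := h4main k
    have h5 := hgt' k
    have h6 := hk1 k
    have h7 : (c k) ^ 2 * (‖Qj (f k)‖ ^ 2 + ((τ k) ^ 2)⁻¹ * ‖Pj (f k)‖ ^ 2)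
        ≤ (c k) ^ 2 * (Nsq k / ((k:ℝ) + 1)) := by
      apply mul_le_mul_of_nonneg_left _ (sq_nonneg (c k))
      rw [le_div_iff₀ h6]
      simp only [hNsq]
      linarith [hgt' k]
    calc (c k * ‖Qj (f k)‖) ^ 2 + ((τ k) ^ 2)⁻¹ * (c k * ‖Pj (f k)‖) ^ 2
        = (c k) ^ 2 * (‖Qj (f k)‖ ^ 2 + ((τ k) ^ 2)⁻¹ * ‖Pj (f k)‖ ^ 2) := by ring
      _ ≤ (c k) ^ 2 * (Nsq k / ((k:ℝ) + 1)) := h7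
      _ = ((c k) ^ 2 * Nsq k) / ((k:ℝ) + 1) := by ring
      _ = 1 / ((k:ℝ) + 1) := by rw [h4]
  have hQgb : ∀ k, ‖Qj (g k)‖ ≤ β k := by
    intro k
    have h1 : ‖Qj (g k)‖ ^ 2 ≤ 1 / ((k:ℝ) + 1) := by
      have := hgproj k
      have h2 : 0 ≤ ((τ k) ^ 2)⁻¹ * ‖Pj (g k)‖ ^ 2 := by
        have := hτ2 k
        positivity
      linarith
    calc ‖Qj (g k)‖ = Real.sqrt (‖Qj (g k)‖ ^ 2) := (Real.sqrt_sq (norm_nonneg _)).symm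
      _ ≤ β k := Real.sqrt_le_sqrt h1
  have hPgb : ∀ k, ‖Pj (g k)‖ ≤ β k * |τ k| := by
    intro k
    have h1 : ‖Pj (g k)‖ ^ 2 ≤ (1 / ((k:ℝ) + 1)) * (τ k) ^ 2 := by
      have h2 := hgproj k
      have h3 : 0 ≤ ‖Qj (g k)‖ ^ 2 := sq_nonneg _
      have h4 := hτ2 k
      have h5 : ((τ k) ^ 2)⁻¹ * ‖Pj (g k)‖ ^ 2 ≤ 1 / ((k:ℝ) + 1) := by linarith
      have h6 := mul_le_mul_of_nonneg_right h5 (le_of_lt h4)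
      rw [mul_comm (((τ k) ^ 2)⁻¹) _, mul_assoc, inv_mul_cancel₀ (ne_of_gt h4), mul_one] at h6
      exact h6
    calc ‖Pj (g k)‖ = Real.sqrt (‖Pj (g k)‖ ^ 2) := (Real.sqrt_sq (norm_nonneg _)).symm
      _ ≤ Real.sqrt ((1 / ((k:ℝ) + 1)) * (τ k) ^ 2) := Real.sqrt_le_sqrt h1
      _ = β k * |τ k| := by rw [Real.sqrt_mul (by positivity), Real.sqrt_sq_eq_abs]
  have hgb : ∀ k, ‖g k‖ ≤ β k + β k := by
    intro k
    have hdec : g k = Pj (g k) + Qj (g k) := by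
      rw [hPj, hQj]
      exact (Submodule.starProjection_add_starProjection_orthogonal (K := X) (g k)).symm
    calc ‖g k‖ = ‖Pj (g k) + Qj (g k)‖ := by rw [← hdec]
      _ ≤ ‖Pj (g k)‖ + ‖Qj (g k)‖ := norm_add_le _ _
      _ ≤ β k * |τ k| + β k := add_le_add (hPgb k) (hQgb k)
      _ ≤ β k + β k := by
          have := hτ1 k
          have := hβ0 k
          nlinarith
  -- re identity chain
  have hre : ∀ k, -(inner ℂ (L (w k)) (w k) : ℂ).re ≤ 2 * β k := by
    intro k
    have hid := re_identity A L hA (τ k) (((c k : ℝ) : ℂ) • u k) (g k) (hrelscaled k)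
    have hLu' : L (((c k : ℝ) : ℂ) • u k) = L (w k) := by
      rw [← hsum k, map_add, hLx k, zero_add]
    rw [hLu', ← hsum k] at hid
    have hsplit : (inner ℂ (L (w k)) (x k + w k) : ℂ)
        = inner ℂ (L (w k)) (x k) + inner ℂ (L (w k)) (w k) := inner_add_right _ _ _
    have hLwx : (inner ℂ (L (w k)) (x k) : ℂ) = 0 := by
      rw [hL (w k) (x k), hLx k, inner_zero_right]
    have hgsplit : (inner ℂ (g k) (x k + w k) : ℂ) = inner ℂ (g k) (x k) + inner ℂ (g k) (w k) :=
      inner_add_right _ _ _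
    have hgx : (inner ℂ (g k) (x k) : ℂ) = inner ℂ (Pj (g k)) (x k) := by
      have hdec : g k = Pj (g k) + Qj (g k) := by
        rw [hPj, hQj]
        exact (Submodule.starProjection_add_starProjection_orthogonal (K := X) (g k)).symm
      conv_lhs => rw [hdec]
      rw [inner_add_left]
      have : (inner ℂ (Qj (g k)) (x k) : ℂ) = 0 := by
        apply Submodule.inner_left_of_mem_orthogonal (hxX k)
        exact (Submodule.orthogonalProjectionOnto Xᗮ (g k)).2
      rw [this, add_zero]
    have hgw : (inner ℂ (g k) (w k) : ℂ) = inner ℂ (Qj (g k)) (w k) := by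
      have hdec : g k = Pj (g k) + Qj (g k) := by
        rw [hPj, hQj]
        exact (Submodule.starProjection_add_starProjection_orthogonal (K := X) (g k)).symm
      conv_lhs => rw [hdec]
      rw [inner_add_left]
      have : (inner ℂ (Pj (g k)) (w k) : ℂ) = 0 := by
        apply Submodule.inner_right_of_mem_orthogonal (Submodule.orthogonalProjectionOnto X (g k)).2 (hwY k)
      rw [this, zero_add]
    -- |inner (Pj g) x| ≤ β, |inner (Qj g) w| ≤ β
    have hb1 : ‖(inner ℂ (Pj (g k)) (x k) : ℂ)‖ ≤ β k := by
      calc ‖(inner ℂ (Pj (g k)) (x k) : ℂ)‖ ≤ ‖Pj (g k)‖ * ‖x k‖ := norm_inner_le_norm _ _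
        _ ≤ (β k * |τ k|) * ‖x k‖ := by
            apply mul_le_mul_of_nonneg_right (hPgb k) (norm_nonneg _)
        _ = β k * (|τ k| * ‖x k‖) := by ring
        _ = β k * ‖v k‖ := by
            rw [hnv k, hnx k]
        _ ≤ β k * 1 := mul_le_mul_of_nonneg_left (hv1 k) (hβ0 k)
        _ = β k := mul_one _
    have hb2 : ‖(inner ℂ (Qj (g k)) (w k) : ℂ)‖ ≤ β k := by
      calc ‖(inner ℂ (Qj (g k)) (w k) : ℂ)‖ ≤ ‖Qj (g k)‖ * ‖w k‖ := norm_inner_le_norm _ _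
        _ ≤ β k * 1 := mul_le_mul (hQgb k) (hw1 k) (norm_nonneg _) (hβ0 k)
        _ = β k := mul_one _
    have hre1 : (inner ℂ (g k) (x k + w k) : ℂ).re ≤ 2 * β k := by
      rw [hgsplit, hgx, hgw]
      have e1 : ((inner ℂ (Pj (g k)) (x k) : ℂ) + inner ℂ (Qj (g k)) (w k)).re
          = (inner ℂ (Pj (g k)) (x k) : ℂ).re + (inner ℂ (Qj (g k)) (w k) : ℂ).re :=
        Complex.add_re _ _
      rw [e1]
      have e2 := (Complex.re_le_norm (inner ℂ (Pj (g k)) (x k) : ℂ)).trans hb1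
      have e3 := (Complex.re_le_norm (inner ℂ (Qj (g k)) (w k) : ℂ)).trans hb2
      linarith
    have hLre : (inner ℂ (L (w k)) (x k + w k) : ℂ).re = (inner ℂ (L (w k)) (w k) : ℂ).re := by
      rw [hsplit, hLwx, zero_add]
    rw [hLre] at hid
    linarith
  have hLw2 : ∀ k, ‖L (w k)‖ ^ 2 ≤ cL * (2 * β k) := by
    intro k
    calc ‖L (w k)‖ ^ 2 ≤ cL * (-(inner ℂ (L (w k)) (w k) : ℂ).re) := hcL' (w k)
      _ ≤ cL * (2 * β k) := mul_le_mul_of_nonneg_left (hre k) hcL0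
  set γ : ℕ → ℝ := fun k => Real.sqrt (cL * (2 * β k)) with hγ
  have hLwb : ∀ k, ‖L (w k)‖ ≤ γ k := by
    intro k
    calc ‖L (w k)‖ = Real.sqrt (‖L (w k)‖ ^ 2) := (Real.sqrt_sq (norm_nonneg _)).symm
      _ ≤ γ k := Real.sqrt_le_sqrt (hLw2 k)
  -- limits
  have hdiv : ∀ cc : ℝ, Filter.Tendsto (fun k : ℕ => cc / ((k:ℝ) + 1)) Filter.atTop (nhds 0) := by
    intro cc
    have h1 : Filter.Tendsto (fun k : ℕ => ((k:ℝ) + 1)) Filter.atTop Filter.atTop :=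
      Filter.tendsto_atTop_add_const_right _ 1 tendsto_natCast_atTop_atTop
    exact Filter.Tendsto.div_atTop tendsto_const_nhds h1
  have hβtend : Filter.Tendsto β Filter.atTop (nhds 0) := by
    rw [hβ]
    have h1 := (Real.continuous_sqrt.tendsto 0).comp (hdiv 1)
    rw [Real.sqrt_zero] at h1
    exact h1
  have hγtend : Filter.Tendsto γ Filter.atTop (nhds 0) := by
    have h2 : Filter.Tendsto (fun k => cL * (2 * β k)) Filter.atTop (nhds 0) := by
      have h3 := (hβtend.const_mul (2:ℝ)).const_mul cL
      simpa only [mul_zero] using h3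
    rw [hγ]
    have h1 := (Real.continuous_sqrt.tendsto 0).comp h2
    rw [Real.sqrt_zero] at h1
    exact h1
  have hgtend : Filter.Tendsto g Filter.atTop (nhds 0) := by
    rw [tendsto_zero_iff_norm_tendsto_zero]
    apply squeeze_zero (fun k => norm_nonneg _) (fun k => hgb k)
    have := hβtend.add hβtend
    simpa only [add_zero] using this
  -- compactness
  set K : Set (ℝ × E × E) :=
    Set.Icc (-1:ℝ) 1 ×ˢ (Metric.closedBall (0:E) 1 ×ˢ Metric.closedBall (0:E) 1) with hK
  have hKcpt : IsCompact K :=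
    isCompact_Icc.prod ((isCompact_closedBall _ _).prod (isCompact_closedBall _ _))
  set p : ℕ → ℝ × E × E := fun k => (τ k, v k, w k) with hp
  have hmem : ∀ k, p k ∈ K := by
    intro k
    refine ⟨?_, ?_, ?_⟩
    · exact Set.mem_Icc.mpr (abs_le.mp (hτ1 k))
    · exact Metric.mem_closedBall.mpr (by simpa [dist_eq_norm] using hv1 k)
    · exact Metric.mem_closedBall.mpr (by simpa [dist_eq_norm] using hw1 k)
  obtain ⟨z, hzK, φ, hφ, hptend⟩ := hKcpt.tendsto_subseq hmem
  have hφtop : Filter.Tendsto φ Filter.atTop Filter.atTop := hφ.tendsto_atTop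
  have htendτ : Filter.Tendsto (fun j => τ (φ j)) Filter.atTop (nhds z.1) :=
    (continuous_fst.tendsto z).comp hptend
  have htendv : Filter.Tendsto (fun j => v (φ j)) Filter.atTop (nhds z.2.1) :=
    ((continuous_fst.comp continuous_snd).tendsto z).comp hptend
  have htendw : Filter.Tendsto (fun j => w (φ j)) Filter.atTop (nhds z.2.2) :=
    ((continuous_snd.comp continuous_snd).tendsto z).comp hptend
  have hcontL : Continuous L := L.continuous_of_finiteDimensional
  have hcontA : Continuous A := A.continuous_of_finiteDimensional
  have hclX : IsClosed (X : Set E) := Submodule.closed_of_finiteDimensional X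
  have hclY : IsClosed ((Xᗮ : Submodule ℂ E) : Set E) := Submodule.closed_of_finiteDimensional _
  have hvzX : z.2.1 ∈ X :=
    hclX.mem_of_tendsto htendv (Filter.Eventually.of_forall fun j => hvX (φ j))
  have hwzY : z.2.2 ∈ Xᗮ :=
    hclY.mem_of_tendsto htendw (Filter.Eventually.of_forall fun j => hwY (φ j))
  have hLwz : L z.2.2 = 0 := by
    have h1 : Filter.Tendsto (fun j => L (w (φ j))) Filter.atTop (nhds (L z.2.2)) :=
      (hcontL.tendsto _).comp htendw
    have h2 : Filter.Tendsto (fun j => L (w (φ j))) Filter.atTop (nhds 0) := by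
      rw [tendsto_zero_iff_norm_tendsto_zero]
      exact squeeze_zero (fun j => norm_nonneg _) (fun j => hLwb (φ j)) (hγtend.comp hφtop)
    exact tendsto_nhds_unique h1 h2
  have hwz0 : z.2.2 = 0 := by
    have hmemX : z.2.2 ∈ X := by rw [← hker]; exact LinearMap.mem_ker.mpr hLwz
    have := (Submodule.mem_orthogonal X z.2.2).mp hwzY z.2.2 hmemX
    exact inner_self_eq_zero.mp this
  -- limit of the relation
  have hrellim : Complex.I • A z.2.1 + ((z.1 : ℂ) * Complex.I) • A z.2.2
      + L z.2.2 + 0 = 0 := by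
    have t1 : Filter.Tendsto (fun j => Complex.I • A (v (φ j))) Filter.atTop
        (nhds (Complex.I • A z.2.1)) :=
      ((hcontA.tendsto _).comp htendv).const_smul Complex.I
    have tc : Filter.Tendsto (fun j => ((τ (φ j) : ℂ) * Complex.I)) Filter.atTop
        (nhds ((z.1 : ℂ) * Complex.I)) :=
      ((Complex.continuous_ofReal.tendsto _).comp htendτ).mul tendsto_const_nhds
    have t2 : Filter.Tendsto (fun j => ((τ (φ j) : ℂ) * Complex.I) • A (w (φ j)))
        Filter.atTop (nhds (((z.1 : ℂ) * Complex.I) • A z.2.2)) :=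
      tc.smul ((hcontA.tendsto _).comp htendw)
    have t3 : Filter.Tendsto (fun j => L (w (φ j))) Filter.atTop (nhds (L z.2.2)) :=
      (hcontL.tendsto _).comp htendw
    have t4 : Filter.Tendsto (fun j => g (φ j)) Filter.atTop (nhds 0) :=
      hgtend.comp hφtop
    have ttot := ((t1.add t2).add t3).add t4
    have hzero : (fun j => Complex.I • A (v (φ j)) + ((τ (φ j) : ℂ) * Complex.I) • A (w (φ j))
        + L (w (φ j)) + g (φ j)) = fun _ => (0:E) := by
      funext j
      exact hrel' (φ j)
    rw [hzero] at ttot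
    exact (tendsto_nhds_unique tendsto_const_nhds ttot).symm
  have hAvz : A z.2.1 = 0 := by
    rw [hLwz, hwz0, map_zero, smul_zero] at hrellim
    simp only [add_zero] at hrellim
    rcases smul_eq_zero.mp hrellim with h | h
    · exact absurd h Complex.I_ne_zero
    · exact h
  have hvz0 : z.2.1 = 0 := hKaw z.2.1 hvzX 0 (by rw [hAvz, zero_smul])
  -- contradiction with the norm identity
  have hlim1 : Filter.Tendsto (fun j => ‖w (φ j)‖ ^ 2 + ‖v (φ j)‖ ^ 2) Filter.atTop
      (nhds (‖z.2.2‖ ^ 2 + ‖z.2.1‖ ^ 2)) :=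
    ((htendw.norm.pow 2).add (htendv.norm.pow 2))
  have hconst : (fun j => ‖w (φ j)‖ ^ 2 + ‖v (φ j)‖ ^ 2) = fun _ => (1:ℝ) := by
    funext j
    exact hone (φ j)
  rw [hconst] at hlim1
  have : (1:ℝ) = ‖z.2.2‖ ^ 2 + ‖z.2.1‖ ^ 2 := tendsto_nhds_unique tendsto_const_nhds hlim1
  rw [hwz0, hvz0] at this
  simp at this

/-- **Steady Kawashima estimate and invertibility.**
Let `X ⊆ ℂ^m` be `n`-dimensional (`1 ≤ n < m`), `A` Hermitian satisfying the
Kawashima condition relative to `X`, and `L` Hermitian negative semidefinite with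
`ker L = X`.  Then there is `C > 0` (depending only on `A`, `L`, `X`) such that for
every `τ ≠ 0` and `iτ A u + L u + f = 0` one has `‖u‖ ≤ C max(1, τ⁻²) ‖f‖`; in
particular `iτA + L` is invertible; moreover for `0 < |τ| ≤ 1` the refined bound
`‖P_Y u‖² + τ²‖P_X u‖² ≤ C (‖P_Y f‖² + τ⁻²‖P_X f‖²)` holds. -/
theorem steady_kawashima_estimate
    (m n : ℕ) (hn : 1 ≤ n) (hnm : n < m)
    (X : Submodule ℂ (EuclideanSpace ℂ (Fin m)))
    (hX : Module.finrank ℂ X = n)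
    (A L : Module.End ℂ (EuclideanSpace ℂ (Fin m)))
    (hA : ∀ u w : EuclideanSpace ℂ (Fin m), (inner ℂ (A u) w : ℂ) = inner ℂ u (A w))
    (hKaw : ∀ x ∈ X, ∀ c : ℂ, A x = c • x → x = 0)
    (hL : ∀ u w : EuclideanSpace ℂ (Fin m), (inner ℂ (L u) w : ℂ) = inner ℂ u (L w))
    (hLneg : ∀ u : EuclideanSpace ℂ (Fin m), (inner ℂ (L u) u : ℂ).re ≤ 0)
    (hker : LinearMap.ker L = X) :
    ∃ C > (0 : ℝ), ∀ τ : ℝ, τ ≠ 0 →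
      (∀ u f : EuclideanSpace ℂ (Fin m),
          ((τ : ℂ) * Complex.I) • A u + L u + f = 0 →
          ‖u‖ ≤ C * max 1 (τ ^ 2)⁻¹ * ‖f‖) ∧
      Function.Bijective
        (fun u : EuclideanSpace ℂ (Fin m) => ((τ : ℂ) * Complex.I) • A u + L u) ∧
      (|τ| ≤ 1 → ∀ u f : EuclideanSpace ℂ (Fin m),
          ((τ : ℂ) * Complex.I) • A u + L u + f = 0 →
          ‖(Submodule.orthogonalProjectionOnto Xᗮ u : EuclideanSpace ℂ (Fin m))‖ ^ 2
              + τ ^ 2 * ‖(Submodule.orthogonalProjectionOnto X u : EuclideanSpace ℂ (Fin m))‖ ^ 2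
            ≤ C * (‖(Submodule.orthogonalProjectionOnto Xᗮ f : EuclideanSpace ℂ (Fin m))‖ ^ 2
              + (τ ^ 2)⁻¹ *
                ‖(Submodule.orthogonalProjectionOnto X f : EuclideanSpace ℂ (Fin m))‖ ^ 2)) := by
  obtain ⟨C1, hC1, hkey⟩ := key_estimate X A L hA hKaw hL hLneg hker
  obtain ⟨C2, hC2, href⟩ := refined_estimate X A L hA hKaw hL hLneg hker
  refine ⟨max C1 C2, lt_max_of_lt_left hC1, fun τ hτ => ⟨?_, ?_, ?_⟩⟩
  · intro u f hrel
    have h1 := hkey τ hτ u f hrel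
    have hM : (0:ℝ) ≤ max 1 (τ ^ 2)⁻¹ := le_trans zero_le_one (le_max_left _ _)
    have hle : C1 ≤ max C1 C2 := le_max_left _ _
    nlinarith [norm_nonneg f, norm_nonneg u, mul_nonneg hM (norm_nonneg f)]
  · set T : Module.End ℂ (EuclideanSpace ℂ (Fin m)) := ((τ : ℂ) * Complex.I) • A + L with hT
    have hfun : (fun u : EuclideanSpace ℂ (Fin m) => ((τ : ℂ) * Complex.I) • A u + L u)
        = ⇑T := by
      funext u
      simp [hT, LinearMap.add_apply, LinearMap.smul_apply]
    rw [hfun]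
    have hinj : Function.Injective ⇑T := by
      intro a b hab
      have hab0 : T (a - b) = 0 := by rw [map_sub, hab, sub_self]
      have hrel0 : ((τ : ℂ) * Complex.I) • A (a - b) + L (a - b) + 0 = 0 := by
        rw [add_zero]
        simpa [hT, LinearMap.add_apply, LinearMap.smul_apply] using hab0
      have := hkey τ hτ (a - b) 0 hrel0
      rw [norm_zero, mul_zero] at this
      have : a - b = 0 := norm_le_zero_iff.mp this
      exact sub_eq_zero.mp this
    exact ⟨hinj, LinearMap.injective_iff_surjective.mp hinj⟩
  · intro hτ1 u f hrel
    have h1 := href τ hτ hτ1 u f hrel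
    have hRHS : (0:ℝ) ≤ ‖(Submodule.orthogonalProjectionOnto Xᗮ f : EuclideanSpace ℂ (Fin m))‖ ^ 2
        + (τ ^ 2)⁻¹ * ‖(Submodule.orthogonalProjectionOnto X f : EuclideanSpace ℂ (Fin m))‖ ^ 2 := by
      have : (0:ℝ) < τ ^ 2 := by positivity
      positivity
    have hle : C2 ≤ max C1 C2 := le_max_right _ _
    nlinarith
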